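/- Let p > 3 be a prime with p ≡ 3 (mod 4), and let a_1,...,a_{(p-1)/2} be all nonzero quadratic residues modulo p. Then the determinant D of [(a_i + a_j)^{(p-3)/2}]_{1≤i,j≤(p-1)/2} over F_p is nonzero, and its Legendre symbol satisfies (D/p) = (((p-1)/2)! / p), i.e., D is a square in F_p exactly when ((p-1)/2)! is a square mod p. -/

import Mathlib

open Finset

private lemma sq_mul_isSquare_iff' {K : Type*} [Field K] {c x : K} (hc : c ≠ 0) :
    IsSquare (c * c * x) ↔ IsSquare x := by
  constructor
  · rintro ⟨r, hr⟩
    refine ⟨c⁻¹ * r, ?_⟩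
    have : x = c⁻¹ * c⁻¹ * (c * c * x) := by field_simp
    rw [this, hr]; ring
  · rintro ⟨r, rfl⟩
    exact ⟨c * r, by ring⟩

private lemma choose_prod_identity (m : ℕ) :
    (∏ k ∈ range (m+1), m.choose k) * (∏ k ∈ range (m+1), Nat.factorial k) ^ 2
      = (Nat.factorial m) ^ (m+1) := by
  have hrefl : ∏ k ∈ range (m+1), Nat.factorial (m-k) = ∏ k ∈ range (m+1), Nat.factorial k := by
    simpa using Finset.prod_range_reflect (fun j => Nat.factorial j) (m+1)
  calc (∏ k ∈ range (m+1), m.choose k) * (∏ k ∈ range (m+1), Nat.factorial k) ^ 2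
      = (∏ k ∈ range (m+1), m.choose k) * ((∏ k ∈ range (m+1), Nat.factorial k) *
          (∏ k ∈ range (m+1), Nat.factorial (m-k))) := by rw [hrefl]; ring
    _ = ∏ k ∈ range (m+1), (m.choose k * (Nat.factorial k * Nat.factorial (m-k))) := by
        rw [← Finset.prod_mul_distrib, ← Finset.prod_mul_distrib]
    _ = ∏ k ∈ range (m+1), Nat.factorial m := by
        refine Finset.prod_congr rfl fun k hk => ?_
        have hk' : k ≤ m := by simpa [Nat.lt_succ_iff] using hk
        rw [← mul_assoc]
        exact Nat.choose_mul_factorial_mul_factorial hk'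
    _ = (Nat.factorial m) ^ (m+1) := by simp

private lemma key_sign (p n N : ℕ) [Fact p.Prime] (h4 : p % 4 = 3) (hp3 : 3 < p)
    (hn : n = (p-1)/2) (hN : N * 2 = n * (n-1)) :
    ∃ d : ZMod p, d ≠ 0 ∧ d * d = (-1)^N * ((n : ℕ) : ZMod p) := by
  have hp : p.Prime := Fact.out
  have hpne2 : p ≠ 2 := by omega
  have h2 : (2 : ZMod p) ≠ 0 := by
    intro h
    have : (p : ℕ) ∣ 2 := by
      rw [← ZMod.natCast_eq_zero_iff]; exact_mod_cast h
    have := Nat.le_of_dvd (by norm_num) this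
    omega
  have hinv : (2 : ZMod p)⁻¹ * 2 = 1 := inv_mul_cancel₀ h2
  have hn2 : (2 : ZMod p) * ((n : ℕ) : ZMod p) = -1 := by
    have hnat : 2 * n = p - 1 := by omega
    have hcast : ((2 * n : ℕ) : ZMod p) = ((p - 1 : ℕ) : ZMod p) := by rw [hnat]
    push_cast at hcast
    rw [hcast, Nat.cast_sub (by omega : (1:ℕ) ≤ p)]
    simp [ZMod.natCast_self]
  have hnval : ((n:ℕ) : ZMod p) = -(2:ZMod p)⁻¹ := by
    apply mul_left_cancel₀ h2
    rw [hn2, mul_neg, mul_inv_cancel₀ h2]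
  have h8 : p % 8 = 3 ∨ p % 8 = 7 := by omega
  rcases h8 with h8 | h8
  · have hNeven : Even N := by
      obtain ⟨s, hs⟩ : ∃ s, p = 8*s+3 := ⟨p/8, by omega⟩
      have hnv : n = 4*s+1 := by omega
      have hq : n * (n-1) = 2*(2*(s*(4*s+1))) := by rw [hnv, Nat.add_sub_cancel]; ring
      set q := s*(4*s+1)
      exact ⟨q, by omega⟩
    obtain ⟨r, hr⟩ : IsSquare (-2 : ZMod p) :=
      (ZMod.exists_sq_eq_neg_two_iff hpne2).mpr (Or.inr h8)
    have hrne : r ≠ 0 := by intro h; rw [h, mul_zero] at hr; exact h2 (by linear_combination -hr)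
    refine ⟨(2:ZMod p)⁻¹ * r, mul_ne_zero (inv_ne_zero h2) hrne, ?_⟩
    rw [hNeven.neg_one_pow, one_mul, hnval,
      show ((2:ZMod p)⁻¹*r)*((2:ZMod p)⁻¹*r) = (2:ZMod p)⁻¹*(2:ZMod p)⁻¹*(r*r) from by ring,
      ← hr]
    field_simp
  · have hNodd : Odd N := by
      obtain ⟨s, hs⟩ : ∃ s, p = 8*s+7 := ⟨p/8, by omega⟩
      have hnv : n = 4*s+3 := by omega
      have hq : n * (n-1) = (2*(4*s*s+5*s+1)+1) * 2 := by
        rw [hnv, show 4*s+3-1 = 4*s+2 by omega]; ring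
      set q := 4*s*s+5*s+1
      exact ⟨q, by omega⟩
    obtain ⟨r, hr⟩ : IsSquare (2 : ZMod p) :=
      (ZMod.exists_sq_eq_two_iff hpne2).mpr (Or.inr h8)
    have hrne : r ≠ 0 := by intro h; rw [h, mul_zero] at hr; exact h2 hr
    refine ⟨(2:ZMod p)⁻¹ * r, mul_ne_zero (inv_ne_zero h2) hrne, ?_⟩
    rw [hNodd.neg_one_pow, hnval,
      show ((2:ZMod p)⁻¹*r)*((2:ZMod p)⁻¹*r) = (2:ZMod p)⁻¹*(2:ZMod p)⁻¹*(r*r) from by ring,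
      ← hr]
    field_simp

theorem stmt_11 (p : ℕ) [Fact p.Prime] (h4 : p % 4 = 3) (hp3 : 3 < p)
    (a : Fin ((p - 1) / 2) → ZMod p) (ha : Function.Injective a)
    (hsq : ∀ x : ZMod p, (∃ i, a i = x) ↔ x ≠ 0 ∧ ∃ y : ZMod p, y ^ 2 = x) :
    Matrix.det (Matrix.of fun i j : Fin ((p - 1) / 2) => (a i + a j) ^ ((p - 3) / 2)) ≠ 0 ∧
    (IsSquare (Matrix.det (Matrix.of fun i j : Fin ((p - 1) / 2) =>
        (a i + a j) ^ ((p - 3) / 2))) ↔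
      IsSquare ((Nat.factorial ((p - 1) / 2) : ZMod p))) := by
  have hpp : p.Prime := Fact.out
  have hm1 : (p - 3) / 2 + 1 = (p - 1) / 2 := by omega
  have hnp : (p - 1) / 2 < p := by omega
  have ha0 : ∀ i, a i ≠ 0 := fun i => ((hsq (a i)).mp ⟨i, rfl⟩).1
  have hasq : ∀ i, IsSquare (a i) := fun i => by
    obtain ⟨-, y, hy⟩ := (hsq (a i)).mp ⟨i, rfl⟩
    exact ⟨y, by rw [← hy]; ring⟩
  set b : Fin ((p - 1) / 2) → ZMod p := fun j => (a j)⁻¹ with hb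
  set cv : Fin ((p - 1) / 2) → ZMod p :=
    fun k => ((((p - 3) / 2).choose (k : ℕ) : ℕ) : ZMod p) with hcv
  set P : Matrix (Fin ((p - 1) / 2)) (Fin ((p - 1) / 2)) (ZMod p) :=
    Matrix.of fun k j => a j ^ ((p - 3) / 2 - (k : ℕ)) with hP
  set W : Matrix (Fin ((p - 1) / 2)) (Fin ((p - 1) / 2)) (ZMod p) :=
    Matrix.of fun k j => cv k * P k j with hW
  set M : Matrix (Fin ((p - 1) / 2)) (Fin ((p - 1) / 2)) (ZMod p) :=
    Matrix.of fun i j => (a i + a j) ^ ((p - 3) / 2) with hM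
  have hMVW : M = Matrix.vandermonde a * W := by
    ext i j
    rw [Matrix.mul_apply]
    simp only [hM, hW, hP, hcv, Matrix.of_apply, Matrix.vandermonde_apply]
    have hfin : ∑ k : Fin ((p - 1) / 2), a i ^ (k : ℕ) *
        (((((p - 3) / 2).choose (k:ℕ) : ℕ) : ZMod p) * a j ^ ((p - 3) / 2 - (k : ℕ)))
        = ∑ k ∈ range ((p - 1) / 2), a i ^ k *
          (((((p - 3) / 2).choose k : ℕ) : ZMod p) * a j ^ ((p - 3) / 2 - k)) :=
      Fin.sum_univ_eq_sum_range (fun k => a i ^ k * (((((p - 3) / 2).choose k : ℕ) : ZMod p)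
        * a j ^ ((p - 3) / 2 - k))) ((p - 1) / 2)
    rw [hfin, ← hm1, add_pow]
    exact Finset.sum_congr rfl fun k hk => by ring
  have hdetW : W.det = (∏ k, cv k) * P.det := Matrix.det_mul_column cv P
  set T := (Matrix.vandermonde b).transpose with hT
  have hPeq : P = Matrix.of fun k j => (fun j => a j ^ ((p - 3) / 2)) j * T k j := by
    ext k j
    simp only [hP, hT, Matrix.of_apply, Matrix.transpose_apply, Matrix.vandermonde_apply, hb]
    have hk : (k : ℕ) ≤ (p - 3) / 2 := by have := k.isLt; omega
    rw [← pow_sub_mul_pow (a j) hk, mul_assoc, inv_pow, mul_inv_cancel₀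
      (pow_ne_zero _ (ha0 j)), mul_one]
  have hdetP : P.det = (∏ j, a j ^ ((p - 3) / 2)) * (Matrix.vandermonde b).det := by
    rw [hPeq, Matrix.det_mul_row (fun j => a j ^ ((p - 3) / 2)) T, hT, Matrix.det_transpose]
  set N : ℕ := ∑ i : Fin ((p - 1) / 2), (Finset.Ioi i).card with hN
  set G : ZMod p := ∏ i : Fin ((p - 1) / 2), ∏ j ∈ Finset.Ioi i,
    ((a j - a i)^2 * (a i)⁻¹ * (a j)⁻¹) with hG
  have hVV : (Matrix.vandermonde b).det * (Matrix.vandermonde a).det = (-1:ZMod p)^N * G := by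
    rw [Matrix.det_vandermonde, Matrix.det_vandermonde, ← Finset.prod_mul_distrib]
    have hpt : ∀ i : Fin ((p - 1) / 2),
        (∏ j ∈ Ioi i, (b j - b i)) * (∏ j ∈ Ioi i, (a j - a i))
        = (-1:ZMod p)^((Ioi i).card) * ∏ j ∈ Ioi i, ((a j - a i)^2 * (a i)⁻¹ * (a j)⁻¹) := by
      intro i
      rw [← Finset.prod_mul_distrib]
      have hterm : ∀ j ∈ Ioi i, (b j - b i) * (a j - a i)
          = (-1) * ((a j - a i)^2 * (a i)⁻¹ * (a j)⁻¹) := by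
        intro j _
        simp only [hb]
        field_simp [ha0 i, ha0 j]
        ring
      rw [Finset.prod_congr rfl hterm, Finset.prod_mul_distrib, Finset.prod_const]
    rw [Finset.prod_congr rfl fun i _ => hpt i, Finset.prod_mul_distrib,
      Finset.prod_pow_eq_pow_sum]
  have hNval : N * 2 = ((p - 1) / 2) * ((p - 1) / 2 - 1) := by
    have h1 : N = ∑ i ∈ range ((p - 1) / 2), ((p - 1) / 2 - 1 - i) := by
      rw [hN, ← Fin.sum_univ_eq_sum_range (fun i => (p - 1) / 2 - 1 - i) ((p - 1) / 2)]
      exact Finset.sum_congr rfl fun i _ => by rw [Fin.card_Ioi]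
    rw [h1, Finset.sum_range_reflect (fun j => j) ((p - 1) / 2)]
    exact Finset.sum_range_id_mul_two ((p - 1) / 2)
  obtain ⟨d, hdne, hdd⟩ := key_sign p ((p - 1) / 2) N h4 hp3 rfl hNval
  set Cn : ℕ := ∏ k ∈ range ((p - 1) / 2), ((p - 3) / 2).choose k with hCn
  set Fn : ℕ := ∏ k ∈ range ((p - 1) / 2), Nat.factorial k with hFn
  have hCF : (Cn : ZMod p) * ((Fn : ZMod p))^2
      = ((Nat.factorial ((p - 3) / 2) : ℕ) : ZMod p)^((p - 1) / 2) := by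
    have hid := choose_prod_identity ((p - 3) / 2)
    rw [hm1] at hid
    exact_mod_cast congrArg (Nat.cast : ℕ → ZMod p) hid
  have hMfac : ((Nat.factorial ((p - 3) / 2) : ℕ) : ZMod p) ≠ 0 := by
    rw [Ne, ZMod.natCast_eq_zero_iff]
    intro hdvd
    have := (Nat.Prime.dvd_factorial hpp).mp hdvd
    omega
  have hFne : ((Fn : ℕ) : ZMod p) ≠ 0 := by
    rw [Ne, ZMod.natCast_eq_zero_iff, hFn]
    intro hdvd
    obtain ⟨k, hk, hpk⟩ := (hpp.prime.dvd_finset_prod_iff _).mp hdvd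
    have := (Nat.Prime.dvd_factorial hpp).mp hpk
    have := Finset.mem_range.mp hk
    omega
  have hcvCn : (∏ k, cv k) = (Cn : ZMod p) := by
    rw [hCn]
    push_cast
    exact Fin.prod_univ_eq_prod_range (fun k => ((((p - 3) / 2).choose k : ℕ) : ZMod p)) _
  have hCz : (Cn : ZMod p) = ((Nat.factorial ((p - 3) / 2) : ℕ) : ZMod p)^((p - 1) / 2) *
      (((Fn : ℕ) : ZMod p)⁻¹)^2 := by
    field_simp
    linear_combination hCF
  obtain ⟨t, ht⟩ : ∃ t, (p - 1) / 2 = 2*t+1 := ⟨(p-3)/4, by omega⟩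
  set U : ZMod p := (((Nat.factorial ((p - 3) / 2) : ℕ) : ZMod p)^t)^2 *
    (((Fn : ℕ) : ZMod p)⁻¹)^2 * (∏ j, a j ^ ((p - 3) / 2)) * G with hU
  have hDfinal : M.det = (-1:ZMod p)^N * ((Nat.factorial ((p - 3) / 2) : ℕ) : ZMod p) * U := by
    rw [hMVW, Matrix.det_mul, hdetW, hdetP, hcvCn, hCz]
    have hpow : ((Nat.factorial ((p - 3) / 2) : ℕ) : ZMod p)^((p - 1) / 2)
        = ((Nat.factorial ((p - 3) / 2) : ℕ) : ZMod p) *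
          (((Nat.factorial ((p - 3) / 2) : ℕ) : ZMod p)^t)^2 := by
      rw [ht]; ring
    rw [hpow]
    have hre : (Matrix.vandermonde a).det * (((Nat.factorial ((p - 3) / 2) : ℕ) : ZMod p) *
        (((Nat.factorial ((p - 3) / 2) : ℕ) : ZMod p)^t)^2 * (((Fn : ℕ) : ZMod p)⁻¹)^2 *
        ((∏ j, a j ^ ((p - 3) / 2)) * (Matrix.vandermonde b).det))
        = ((Nat.factorial ((p - 3) / 2) : ℕ) : ZMod p) *
          (((Nat.factorial ((p - 3) / 2) : ℕ) : ZMod p)^t)^2 *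
          (((Fn : ℕ) : ZMod p)⁻¹)^2 * (∏ j, a j ^ ((p - 3) / 2)) *
          ((Matrix.vandermonde b).det * (Matrix.vandermonde a).det) := by
      ring
    rw [hre, hVV, hU]
    ring
  have hAsq : IsSquare (∏ j, a j ^ ((p - 3) / 2)) :=
    Finset.prod_induction _ _ (fun _ _ => IsSquare.mul) IsSquare.one
      (fun j _ => (hasq j).pow _)
  have hGsq : IsSquare G := by
    rw [hG]
    refine Finset.prod_induction _ _ (fun _ _ => IsSquare.mul) IsSquare.one (fun i _ => ?_)
    refine Finset.prod_induction _ _ (fun _ _ => IsSquare.mul) IsSquare.one (fun j _ => ?_)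
    exact (((IsSquare.sq (a j - a i)).mul (hasq i).inv)).mul (hasq j).inv
  have hAne : (∏ j, a j ^ ((p - 3) / 2)) ≠ 0 :=
    Finset.prod_ne_zero_iff.mpr fun j _ => pow_ne_zero _ (ha0 j)
  have hGne : G ≠ 0 := by
    rw [hG]
    refine Finset.prod_ne_zero_iff.mpr fun i _ => ?_
    refine Finset.prod_ne_zero_iff.mpr fun j hj => ?_
    have hij : i ≠ j := Fin.ne_of_lt (Finset.mem_Ioi.mp hj)
    have hsub : a j - a i ≠ 0 := sub_ne_zero.mpr fun h => hij ((ha h).symm)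
    exact mul_ne_zero (mul_ne_zero (pow_ne_zero _ hsub) (inv_ne_zero (ha0 i)))
      (inv_ne_zero (ha0 j))
  have hUsq : IsSquare U := by
    rw [hU]
    exact (((IsSquare.sq _).mul (IsSquare.sq _)).mul hAsq).mul hGsq
  have hUne : U ≠ 0 := by
    rw [hU]
    exact mul_ne_zero (mul_ne_zero (mul_ne_zero (pow_ne_zero _ (pow_ne_zero _ hMfac))
      (pow_ne_zero _ (inv_ne_zero hFne))) hAne) hGne
  obtain ⟨u, hu⟩ := hUsq
  have hune : u ≠ 0 := fun h => hUne (by rw [hu, h, mul_zero])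
  have hD2 : M.det = u * u *
      ((-1:ZMod p)^N * ((Nat.factorial ((p - 3) / 2) : ℕ) : ZMod p)) := by
    rw [hDfinal, hu]; ring
  have hsign2 : ((-1:ZMod p)^N) * ((-1:ZMod p)^N) = 1 := by
    rw [← mul_pow]; norm_num
  have hnfac : ((Nat.factorial ((p - 1) / 2) : ℕ) : ZMod p)
      = d * d * ((-1:ZMod p)^N * ((Nat.factorial ((p - 3) / 2) : ℕ) : ZMod p)) := by
    have h1 : ((Nat.factorial ((p - 1) / 2) : ℕ) : ZMod p)
        = ((((p - 1) / 2 : ℕ)) : ZMod p) * ((Nat.factorial ((p - 3) / 2) : ℕ) : ZMod p) := by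
      rw [← hm1, Nat.factorial_succ]
      push_cast
      ring
    rw [h1, hdd,
      show (-1:ZMod p)^N * (((p - 1) / 2 : ℕ) : ZMod p) *
          ((-1:ZMod p)^N * ((Nat.factorial ((p - 3) / 2) : ℕ) : ZMod p))
        = ((-1:ZMod p)^N * (-1:ZMod p)^N) * ((((p - 1) / 2 : ℕ) : ZMod p) *
          ((Nat.factorial ((p - 3) / 2) : ℕ) : ZMod p)) from by ring,
      hsign2, one_mul]
  constructor
  · rw [hD2]
    exact mul_ne_zero (mul_ne_zero hune hune)
      (mul_ne_zero (pow_ne_zero _ (neg_ne_zero.mpr one_ne_zero)) hMfac)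
  · rw [hD2, sq_mul_isSquare_iff' hune, hnfac, sq_mul_isSquare_iff' hdne]
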